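/- arXiv:2208.01563 — 2 statements merged into one kernel-verified Lean document; each statement's English description precedes it below -/
import Mathlib

section
/- Let (U ⊎ W, P) be an SM-T instance with |U| = |W| = n, let N be a weakly stable matching of size n−1, let m_s ∈ U and w_s ∈ W be the two agents unmatched by N, and let ℓ ∈ ℕ. Construct two weak preference profiles P1, P2 on the agent set U ∪ W ∪ {m*, w*, m*_s, w*_s} as follows. Agent m* accepts w* and all women of W, strictly preferring every woman of W (in an arbitrary but fixed strict order) to w*; symmetrically, w* accepts m* and all men of U, strictly preferring every man of U (in an arbitrary but fixed strict order) to m*; m* is appended at the end of every woman's preference list and w* at the end of every man's preference list. Agent m*_s accepts only w_s and w*_s, with preference list w_s ≻ w*_s in P1; agent w*_s accepts only m*_s and m_s, with preference list m*_s ≻ m_s in both profiles. In both profiles, m_s's preference list consists of w*_s followed by his list from P (with w* appended at its end), and w_s's preference list consists of m*_s followed by her list from P (with m* appended at its end); all other agents of U ∪ W keep their lists from P (with w* resp. m* appended at the end). Profile P2 is identical to P1 except that m*_s's preference list is w*_s ≻ w_s. Set M1 := N ∪ {{m*, w*}, {m_s, w*_s}, {m*_s, w_s}} and k := ℓ + 3.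 Then M1 is weakly stable with respect to P1, and the following are equivalent: (i) (U ⊎ W, P) has a perfect weakly stable matching N* with |N △ N*| ≤ ℓ; (ii) there is a matching M2 weakly stable with respect to P2 with {m*, w*} ∈ M2 and |M1 △ M2| ≤ k. -/
/-- A preference profile: each agent has a finite set of acceptable agents and a
rank function encoding its preference list (lower rank = more preferred). -/
structure PrefProfile (A : Type*) where
  acc : A → Finset A
  rank : A → A → ℕ

namespace PrefProfile

variable {A : Type*} (P : PrefProfile A)

/-- Agent `a` strictly prefers `b` to `c`. -/
def Prefers (a b c : A) : Prop := P.rank a b < P.rank a c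

/-- A lawful SR(-T) profile: no agent accepts itself and acceptability is symmetric. -/
def Lawful : Prop := (∀ a, a ∉ P.acc a) ∧ (∀ a b : A, b ∈ P.acc a → a ∈ P.acc b)

/-- Strict preferences: no ties among acceptable agents. -/
def Strict : Prop := ∀ a : A, ∀ b ∈ P.acc a, ∀ c ∈ P.acc a, P.rank a b = P.rank a c → b = c

end PrefProfile

/-- A finite set of unordered pairs of agents is a matching if its pairs are
non-diagonal and pairwise disjoint. -/
def IsMatching {A : Type*} (M : Finset (Sym2 A)) : Prop :=
  (∀ p ∈ M, ¬ p.IsDiag) ∧ ∀ a b c : A, s(a, b) ∈ M → s(a, c) ∈ M → b = c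

/-- `a` is matched in `M`. -/
def Matched {A : Type*} (M : Finset (Sym2 A)) (a : A) : Prop := ∃ b, s(a, b) ∈ M

/-- A matching is perfect if it matches all agents. -/
def IsPerfect {A : Type*} (M : Finset (Sym2 A)) : Prop := ∀ a, Matched M a

/-- All pairs of `M` consist of mutually acceptable agents w.r.t. `P`. -/
def Acceptable {A : Type*} (P : PrefProfile A) (M : Finset (Sym2 A)) : Prop :=
  ∀ a b : A, s(a, b) ∈ M → b ∈ P.acc a

/-- The pair `{a, b}` blocks `M` w.r.t. `P`: `a` and `b` accept each other, and each
of them is either unmatched or strictly prefers the other to its partner. -/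
def Blocks {A : Type*} (P : PrefProfile A) (M : Finset (Sym2 A)) (a b : A) : Prop :=
  b ∈ P.acc a ∧ a ∈ P.acc b ∧
    (∀ c, s(a, c) ∈ M → P.Prefers a b c) ∧ (∀ c, s(b, c) ∈ M → P.Prefers b a c)

/-- `M` is a (weakly) stable matching for `P`. -/
def IsStable {A : Type*} (P : PrefProfile A) (M : Finset (Sym2 A)) : Prop :=
  IsMatching M ∧ Acceptable P M ∧ ∀ a b : A, ¬ Blocks P M a b

noncomputable section
open Classical

/-- Agents of the constructed instance: the men `U ⊕ Fin 2` (where `Sum.inr 0 = m*`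
and `Sum.inr 1 = m*_s`) and the women `W ⊕ Fin 2` (where `Sum.inr 0 = w*` and
`Sum.inr 1 = w*_s`). -/
abbrev Agent7 (U W : Type*) := (U ⊕ Fin 2) ⊕ (W ⊕ Fin 2)

variable {U W : Type*}

def mOld (u : U) : Agent7 U W := Sum.inl (Sum.inl u)
def wOld (w : W) : Agent7 U W := Sum.inr (Sum.inl w)
def mStar : Agent7 U W := Sum.inl (Sum.inr 0)
def mStarS : Agent7 U W := Sum.inl (Sum.inr 1)
def wStar : Agent7 U W := Sum.inr (Sum.inr 0)
def wStarS : Agent7 U W := Sum.inr (Sum.inr 1)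

/-- The embedding of the original agents. -/
def emb7 : U ⊕ W → Agent7 U W := Sum.map Sum.inl Sum.inl

variable [Fintype U] [Fintype W] [DecidableEq U] [DecidableEq W]

/-- The constructed profile (`P1` for `swapped = false`, `P2` for `swapped = true`):
`m*` accepts all women of `W` (in the arbitrary fixed strict order given by the
injection `ow`) followed by `w*`; symmetrically for `w*` (with order `om`); `m*_s`
accepts `w_s ≻ w*_s` (swapped in `P2`); `w*_s` accepts `m*_s ≻ m_s`; `m_s`'s list
is `w*_s`, then his list from `P`, then `w*`; `w_s`'s list is `m*_s`, then her list
from `P`, then `m*`; every other original agent keeps its list from `P`, with `w*`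
(resp. `m*`) appended at the end. -/
def prof7 (P : PrefProfile (U ⊕ W)) (om : U → ℕ) (ow : W → ℕ) (ms : U) (ws : W)
    (swapped : Bool) : PrefProfile (Agent7 U W) where
  acc x :=
    match x with
    | Sum.inl (Sum.inl u) =>
        ((P.acc (Sum.inl u)).image emb7 ∪ {wStar}) ∪
          (if u = ms then {wStarS} else ∅)
    | Sum.inl (Sum.inr i) =>
        if i = 0 then (Finset.univ.image fun w : W => wOld w) ∪ {wStar}
        else {wOld ws, wStarS}
    | Sum.inr (Sum.inl w) =>
        ((P.acc (Sum.inr w)).image emb7 ∪ {mStar}) ∪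
          (if w = ws then {mStarS} else ∅)
    | Sum.inr (Sum.inr i) =>
        if i = 0 then (Finset.univ.image fun u : U => mOld u) ∪ {mStar}
        else {mStarS, mOld ms}
  rank x y :=
    match x, y with
    | Sum.inl (Sum.inl u), Sum.inr (Sum.inl w) => P.rank (Sum.inl u) (Sum.inr w) + 1
    | Sum.inl (Sum.inl u), Sum.inr (Sum.inr i) =>
        if i = 0 then ((P.acc (Sum.inl u)).sup (P.rank (Sum.inl u))) + 2 else 0
    | Sum.inl (Sum.inr i), Sum.inr (Sum.inl w) =>
        if i = 0 then ow w else (if swapped then 1 else 0)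
    | Sum.inl (Sum.inr i), Sum.inr (Sum.inr _) =>
        if i = 0 then (Finset.univ.sup ow) + 1 else (if swapped then 0 else 1)
    | Sum.inr (Sum.inl w), Sum.inl (Sum.inl u) => P.rank (Sum.inr w) (Sum.inl u) + 1
    | Sum.inr (Sum.inl w), Sum.inl (Sum.inr i) =>
        if i = 0 then ((P.acc (Sum.inr w)).sup (P.rank (Sum.inr w))) + 2 else 0
    | Sum.inr (Sum.inr i), Sum.inl (Sum.inl u) => if i = 0 then om u else 1
    | Sum.inr (Sum.inr i), Sum.inl (Sum.inr _) =>
        if i = 0 then (Finset.univ.sup om) + 1 else 0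
    | _, _ => 0

/-- `M1 := N ∪ {{m*, w*}, {m_s, w*_s}, {m*_s, w_s}}`. -/
def M1def7 (N : Finset (Sym2 (U ⊕ W))) (ms : U) (ws : W) : Finset (Sym2 (Agent7 U W)) :=
  N.image (Sym2.map emb7) ∪
    {s((mStar : Agent7 U W), wStar), s(mOld ms, wStarS), s(mStarS, wOld ws)}

-- ============ helpers ============
set_option linter.unusedSectionVars false

lemma emb7_inj : Function.Injective (emb7 : U ⊕ W → Agent7 U W) := by
  intro a b h
  cases a <;> cases b <;> simp_all [emb7]

lemma emb7_ne_mStar (a : U ⊕ W) : emb7 a ≠ (mStar : Agent7 U W) := by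
  cases a <;> simp [emb7, mStar]
lemma emb7_ne_mStarS (a : U ⊕ W) : emb7 a ≠ (mStarS : Agent7 U W) := by
  cases a <;> simp [emb7, mStarS]
lemma emb7_ne_wStar (a : U ⊕ W) : emb7 a ≠ (wStar : Agent7 U W) := by
  cases a <;> simp [emb7, wStar]
lemma emb7_ne_wStarS (a : U ⊕ W) : emb7 a ≠ (wStarS : Agent7 U W) := by
  cases a <;> simp [emb7, wStarS]

lemma emb7_eq_mOld {a : U ⊕ W} {u : U} : emb7 a = mOld u ↔ a = Sum.inl u := by
  cases a <;> simp [emb7, mOld]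
lemma emb7_eq_wOld {a : U ⊕ W} {w : W} : emb7 a = wOld w ↔ a = Sum.inr w := by
  cases a <;> simp [emb7, wOld]

lemma mem_image_emb {N : Finset (Sym2 (U ⊕ W))} {x y : Agent7 U W} :
    s(x, y) ∈ N.image (Sym2.map emb7) ↔ ∃ a b, s(a, b) ∈ N ∧ x = emb7 a ∧ y = emb7 b := by
  constructor
  · intro h
    obtain ⟨p, hp, hpe⟩ := Finset.mem_image.mp h
    induction p using Sym2.ind with
    | _ a b =>
      rw [Sym2.map_pair_eq, Sym2.eq_iff] at hpe
      rcases hpe with ⟨h1, h2⟩ | ⟨h1, h2⟩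
      · exact ⟨a, b, hp, h1.symm, h2.symm⟩
      · exact ⟨b, a, by rwa [Sym2.eq_swap] at hp, h2.symm, h1.symm⟩
  · rintro ⟨a, b, hab, rfl, rfl⟩
    exact Finset.mem_image.mpr ⟨s(a, b), hab, Sym2.map_pair_eq ..⟩

lemma mem_image_emb' {N : Finset (Sym2 (U ⊕ W))} {a b : U ⊕ W} :
    s(emb7 a, emb7 b) ∈ N.image (Sym2.map emb7) ↔ s(a, b) ∈ N := by
  rw [mem_image_emb]
  constructor
  · rintro ⟨a', b', h, ha, hb⟩
    rwa [emb7_inj ha, emb7_inj hb]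
  · exact fun h => ⟨a, b, h, rfl, rfl⟩


variable {P : PrefProfile (U ⊕ W)} {om : U → ℕ} {ow : W → ℕ} {ms : U} {ws : W} {sw : Bool}

lemma rk1 (u : U) (w : W) :
    (prof7 P om ow ms ws sw).rank (mOld u) (wOld w) = P.rank (Sum.inl u) (Sum.inr w) + 1 := rfl
lemma rk2 (u : U) :
    (prof7 P om ow ms ws sw).rank (mOld u) wStar = ((P.acc (Sum.inl u)).sup (P.rank (Sum.inl u))) + 2 := rfl
lemma rk3 (u : U) : (prof7 P om ow ms ws sw).rank (mOld u) wStarS = 0 := rfl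
lemma rk4 (w : W) : (prof7 P om ow ms ws sw).rank mStar (wOld w) = ow w := rfl
lemma rk5 : (prof7 P om ow ms ws sw).rank mStar wStar = (Finset.univ.sup ow) + 1 := rfl
lemma rk6 (w : W) : (prof7 P om ow ms ws sw).rank mStarS (wOld w) = if sw then 1 else 0 := rfl
lemma rk7 : (prof7 P om ow ms ws sw).rank mStarS wStarS = if sw then 0 else 1 := rfl
lemma rk8 (w : W) (u : U) :
    (prof7 P om ow ms ws sw).rank (wOld w) (mOld u) = P.rank (Sum.inr w) (Sum.inl u) + 1 := rfl
lemma rk9 (w : W) :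
    (prof7 P om ow ms ws sw).rank (wOld w) mStar = ((P.acc (Sum.inr w)).sup (P.rank (Sum.inr w))) + 2 := rfl
lemma rk10 (w : W) : (prof7 P om ow ms ws sw).rank (wOld w) mStarS = 0 := rfl
lemma rk11 (u : U) : (prof7 P om ow ms ws sw).rank wStar (mOld u) = om u := rfl
lemma rk12 : (prof7 P om ow ms ws sw).rank wStar mStar = (Finset.univ.sup om) + 1 := rfl
lemma rk13 (u : U) : (prof7 P om ow ms ws sw).rank wStarS (mOld u) = 1 := rfl
lemma rk14 : (prof7 P om ow ms ws sw).rank wStarS mStarS = 0 := rfl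

lemma acc_mOld {u : U} {y : Agent7 U W} :
    y ∈ (prof7 P om ow ms ws sw).acc (mOld u) ↔
      (∃ x ∈ P.acc (Sum.inl u), emb7 x = y) ∨ y = wStar ∨ (u = ms ∧ y = wStarS) := by
  show y ∈ ((P.acc (Sum.inl u)).image emb7 ∪ {wStar}) ∪ (if u = ms then {wStarS} else ∅) ↔ _
  by_cases h : u = ms <;> simp [h] <;> simp only [or_comm, or_left_comm, or_assoc]
lemma acc_wOld {w : W} {y : Agent7 U W} :
    y ∈ (prof7 P om ow ms ws sw).acc (wOld w) ↔
      (∃ x ∈ P.acc (Sum.inr w), emb7 x = y) ∨ y = mStar ∨ (w = ws ∧ y = mStarS) := by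
  show y ∈ ((P.acc (Sum.inr w)).image emb7 ∪ {mStar}) ∪ (if w = ws then {mStarS} else ∅) ↔ _
  by_cases h : w = ws <;> simp [h] <;> simp only [or_comm, or_left_comm, or_assoc]
lemma acc_mStar {y : Agent7 U W} :
    y ∈ (prof7 P om ow ms ws sw).acc mStar ↔ (∃ w : W, y = wOld w) ∨ y = wStar := by
  show y ∈ (Finset.univ.image fun w : W => wOld w) ∪ {wStar} ↔ _
  simp [eq_comm]
  exact or_comm
lemma acc_wStar {y : Agent7 U W} :
    y ∈ (prof7 P om ow ms ws sw).acc wStar ↔ (∃ u : U, y = mOld u) ∨ y = mStar := by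
  show y ∈ (Finset.univ.image fun u : U => mOld u) ∪ {mStar} ↔ _
  simp [eq_comm]
  exact or_comm
lemma acc_mStarS {y : Agent7 U W} :
    y ∈ (prof7 P om ow ms ws sw).acc mStarS ↔ y = wOld ws ∨ y = wStarS := by
  show y ∈ ({wOld ws, wStarS} : Finset (Agent7 U W)) ↔ _
  simp
lemma acc_wStarS {y : Agent7 U W} :
    y ∈ (prof7 P om ow ms ws sw).acc wStarS ↔ y = mStarS ∨ y = mOld ms := by
  show y ∈ ({mStarS, mOld ms} : Finset (Agent7 U W)) ↔ _
  simp

def M2def7 (Nstar : Finset (Sym2 (U ⊕ W))) : Finset (Sym2 (Agent7 U W)) :=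
  Nstar.image (Sym2.map emb7) ∪ {s((mStar : Agent7 U W), wStar), s(mStarS, wStarS)}

lemma mem_M1 {N : Finset (Sym2 (U ⊕ W))} {x y : Agent7 U W} :
    s(x, y) ∈ M1def7 N ms ws ↔
      (∃ a b, s(a, b) ∈ N ∧ x = emb7 a ∧ y = emb7 b) ∨
      (x = mStar ∧ y = wStar) ∨ (x = wStar ∧ y = mStar) ∨
      (x = mOld ms ∧ y = wStarS) ∨ (x = wStarS ∧ y = mOld ms) ∨
      (x = mStarS ∧ y = wOld ws) ∨ (x = wOld ws ∧ y = mStarS) := by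
  unfold M1def7
  rw [Finset.mem_union, mem_image_emb]
  simp only [Finset.mem_insert, Finset.mem_singleton, Sym2.eq_iff, or_assoc]

lemma mem_M2 {N : Finset (Sym2 (U ⊕ W))} {x y : Agent7 U W} :
    s(x, y) ∈ M2def7 N ↔
      (∃ a b, s(a, b) ∈ N ∧ x = emb7 a ∧ y = emb7 b) ∨
      (x = mStar ∧ y = wStar) ∨ (x = wStar ∧ y = mStar) ∨
      (x = mStarS ∧ y = wStarS) ∨ (x = wStarS ∧ y = mStarS) := by
  unfold M2def7
  rw [Finset.mem_union, mem_image_emb]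
  simp only [Finset.mem_insert, Finset.mem_singleton, Sym2.eq_iff, or_assoc]

set_option maxHeartbeats 2000000 in
lemma M1_matching {N : Finset (Sym2 (U ⊕ W))} (hN : IsMatching N)
    (hms : ¬ Matched N (Sum.inl ms)) (hws : ¬ Matched N (Sum.inr ws)) :
    IsMatching (M1def7 N ms ws) := by
  constructor
  · intro p hp
    unfold M1def7 at hp
    rcases Finset.mem_union.mp hp with hp | hp
    · obtain ⟨q, hq, rfl⟩ := Finset.mem_image.mp hp
      induction q using Sym2.ind with
      | _ a b =>
        rw [Sym2.map_pair_eq, Sym2.mk_isDiag_iff]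
        intro h
        exact hN.1 _ hq (Sym2.mk_isDiag_iff.mpr (emb7_inj h))
    · simp only [Finset.mem_insert, Finset.mem_singleton] at hp
      rcases hp with rfl | rfl | rfl <;>
        simp [Sym2.mk_isDiag_iff, mStar, wStar, mStarS, wStarS, mOld, wOld]
  · intro a b c h1 h2
    rw [mem_M1] at h1 h2
    rcases h1 with ⟨a1, b1, hn1, rfl, rfl⟩ | ⟨rfl, rfl⟩ | ⟨rfl, rfl⟩ | ⟨rfl, rfl⟩ |
      ⟨rfl, rfl⟩ | ⟨rfl, rfl⟩ | ⟨rfl, rfl⟩ <;>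
      rcases h2 with ⟨a2, b2, hn2, ha2, rfl⟩ | ⟨ha2, rfl⟩ | ⟨ha2, rfl⟩ | ⟨ha2, rfl⟩ |
        ⟨ha2, rfl⟩ | ⟨ha2, rfl⟩ | ⟨ha2, rfl⟩
    · rw [emb7_inj ha2] at hn1
      rw [hN.2 _ _ _ hn2 hn1]
    all_goals first
      | rfl
      | (exact absurd ha2 (emb7_ne_mStar _))
      | (exact absurd ha2 (emb7_ne_wStar _))
      | (exact absurd ha2 (emb7_ne_mStarS _))
      | (exact absurd ha2 (emb7_ne_wStarS _))
      | (exact absurd ha2.symm (emb7_ne_mStar _))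
      | (exact absurd ha2.symm (emb7_ne_wStar _))
      | (exact absurd ha2.symm (emb7_ne_mStarS _))
      | (exact absurd ha2.symm (emb7_ne_wStarS _))
      | (exact absurd hn1 (by rw [emb7_eq_mOld.mp ha2]; exact fun h => hms ⟨_, h⟩))
      | (exact absurd hn1 (by rw [emb7_eq_wOld.mp ha2]; exact fun h => hws ⟨_, h⟩))
      | (exact absurd hn2 (by rw [emb7_eq_mOld.mp ha2.symm]; exact fun h => hms ⟨_, h⟩))
      | (exact absurd hn2 (by rw [emb7_eq_wOld.mp ha2.symm]; exact fun h => hws ⟨_, h⟩))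
      | (exact absurd ha2 (by simp [mStar, wStar, mStarS, wStarS, mOld, wOld]))

set_option maxHeartbeats 2000000 in
lemma M2_matching {N : Finset (Sym2 (U ⊕ W))} (hN : IsMatching N) :
    IsMatching (M2def7 N) := by
  constructor
  · intro p hp
    unfold M2def7 at hp
    rcases Finset.mem_union.mp hp with hp | hp
    · obtain ⟨q, hq, rfl⟩ := Finset.mem_image.mp hp
      induction q using Sym2.ind with
      | _ a b =>
        rw [Sym2.map_pair_eq, Sym2.mk_isDiag_iff]
        intro h
        exact hN.1 _ hq (Sym2.mk_isDiag_iff.mpr (emb7_inj h))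
    · simp only [Finset.mem_insert, Finset.mem_singleton] at hp
      rcases hp with rfl | rfl <;>
        simp [Sym2.mk_isDiag_iff, mStar, wStar, mStarS, wStarS]
  · intro a b c h1 h2
    rw [mem_M2] at h1 h2
    rcases h1 with ⟨a1, b1, hn1, rfl, rfl⟩ | ⟨rfl, rfl⟩ | ⟨rfl, rfl⟩ | ⟨rfl, rfl⟩ | ⟨rfl, rfl⟩ <;>
      rcases h2 with ⟨a2, b2, hn2, ha2, rfl⟩ | ⟨ha2, rfl⟩ | ⟨ha2, rfl⟩ | ⟨ha2, rfl⟩ | ⟨ha2, rfl⟩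
    · rw [emb7_inj ha2] at hn1
      rw [hN.2 _ _ _ hn2 hn1]
    all_goals first
      | rfl
      | (exact absurd ha2 (emb7_ne_mStar _))
      | (exact absurd ha2 (emb7_ne_wStar _))
      | (exact absurd ha2 (emb7_ne_mStarS _))
      | (exact absurd ha2 (emb7_ne_wStarS _))
      | (exact absurd ha2.symm (emb7_ne_mStar _))
      | (exact absurd ha2.symm (emb7_ne_wStar _))
      | (exact absurd ha2.symm (emb7_ne_mStarS _))
      | (exact absurd ha2.symm (emb7_ne_wStarS _))
      | (exact absurd ha2 (by simp [mStar, wStar, mStarS, wStarS]))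


lemma symmDiff_union_union {α : Type*} [DecidableEq α] {s1 s2 u1 u2 : Finset α}
    (h11 : Disjoint s1 u1) (h12 : Disjoint s1 u2) (h21 : Disjoint s2 u1)
    (h22 : Disjoint s2 u2) :
    symmDiff (s1 ∪ u1) (s2 ∪ u2) = symmDiff s1 s2 ∪ symmDiff u1 u2 := by
  ext a
  have k11 : a ∈ s1 → a ∉ u1 := fun h => Finset.disjoint_left.mp h11 h
  have k12 : a ∈ s1 → a ∉ u2 := fun h => Finset.disjoint_left.mp h12 h
  have k21 : a ∈ s2 → a ∉ u1 := fun h => Finset.disjoint_left.mp h21 h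
  have k22 : a ∈ s2 → a ∉ u2 := fun h => Finset.disjoint_left.mp h22 h
  simp only [Finset.mem_symmDiff, Finset.mem_union] at *
  tauto

lemma not_mem_image_left {x y : Agent7 U W} (hx : ∀ a, emb7 a ≠ x)
    (X : Finset (Sym2 (U ⊕ W))) : s(x, y) ∉ X.image (Sym2.map emb7) := by
  intro h
  obtain ⟨a, b, _, ha, _⟩ := mem_image_emb.mp h
  exact hx a ha.symm

lemma not_mem_image_right {x y : Agent7 U W} (hy : ∀ a, emb7 a ≠ y)
    (X : Finset (Sym2 (U ⊕ W))) : s(x, y) ∉ X.image (Sym2.map emb7) := by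
  intro h
  obtain ⟨a, b, _, _, hb⟩ := mem_image_emb.mp h
  exact hy b hb.symm

lemma pair_ne_1 : s((mStar : Agent7 U W), wStar) ≠ s(mOld ms, wStarS) := by
  simp [Sym2.eq_iff, mStar, wStar, mOld, wOld, mStarS, wStarS]
lemma pair_ne_2 : s((mStar : Agent7 U W), wStar) ≠ s(mStarS, wOld ws) := by
  simp [Sym2.eq_iff, mStar, wStar, mOld, wOld, mStarS, wStarS,
    show (0 : Fin 2) ≠ 1 by decide]
lemma pair_ne_3 : s((mStar : Agent7 U W), wStar) ≠ s(mStarS, wStarS) := by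
  simp [Sym2.eq_iff, mStar, wStar, mOld, wOld, mStarS, wStarS,
    show (0 : Fin 2) ≠ 1 by decide]
lemma pair_ne_4 : s(mOld ms, wStarS) ≠ s((mStarS : Agent7 U W), wOld ws) := by
  simp [Sym2.eq_iff, mStar, wStar, mOld, wOld, mStarS, wStarS]
lemma pair_ne_5 : s(mOld ms, wStarS) ≠ s((mStarS : Agent7 U W), wStarS) := by
  simp [Sym2.eq_iff, mStar, wStar, mOld, wOld, mStarS, wStarS]
lemma pair_ne_6 : s((mStarS : Agent7 U W), wOld ws) ≠ s(mStarS, wStarS) := by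
  simp [Sym2.eq_iff, mStar, wStar, mOld, wOld, mStarS, wStarS]

lemma symmDiff_M1_M2 (N Ns : Finset (Sym2 (U ⊕ W))) :
    (symmDiff (M1def7 N ms ws) (M2def7 Ns)).card = (symmDiff N Ns).card + 3 := by
  classical
  have e1 : M1def7 N ms ws = N.image (Sym2.map emb7) ∪
      (({s(mOld ms, wStarS), s((mStarS : Agent7 U W), wOld ws)} : Finset _) ∪
        {s((mStar : Agent7 U W), wStar)}) := by
    unfold M1def7
    congr 1
    ext p
    simp only [Finset.mem_insert, Finset.mem_singleton, Finset.mem_union]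
    tauto
  have e2 : M2def7 Ns = Ns.image (Sym2.map emb7) ∪
      (({s((mStarS : Agent7 U W), wStarS)} : Finset _) ∪
        {s((mStar : Agent7 U W), wStar)}) := by
    unfold M2def7
    congr 1
    ext p
    simp only [Finset.mem_insert, Finset.mem_singleton, Finset.mem_union]
    tauto
  have dimg : ∀ (X : Finset (Sym2 (U ⊕ W))) (T : Finset (Sym2 (Agent7 U W))),
      (∀ p ∈ T, p ∉ X.image (Sym2.map emb7)) → Disjoint (X.image (Sym2.map emb7)) T :=
    fun X T h => Finset.disjoint_right.mpr h
  have d1 : ∀ X : Finset (Sym2 (U ⊕ W)), Disjoint (X.image (Sym2.map emb7))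
      (({s(mOld ms, wStarS), s((mStarS : Agent7 U W), wOld ws)} : Finset _) ∪
        {s((mStar : Agent7 U W), wStar)}) := by
    intro X
    apply dimg
    intro p hp
    simp only [Finset.mem_union, Finset.mem_insert, Finset.mem_singleton] at hp
    rcases hp with (rfl | rfl) | rfl
    · exact not_mem_image_right emb7_ne_wStarS X
    · exact not_mem_image_left emb7_ne_mStarS X
    · exact not_mem_image_left emb7_ne_mStar X
  have d2 : ∀ X : Finset (Sym2 (U ⊕ W)), Disjoint (X.image (Sym2.map emb7))
      (({s((mStarS : Agent7 U W), wStarS)} : Finset _) ∪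
        {s((mStar : Agent7 U W), wStar)}) := by
    intro X
    apply dimg
    intro p hp
    simp only [Finset.mem_union, Finset.mem_singleton] at hp
    rcases hp with rfl | rfl
    · exact not_mem_image_left emb7_ne_mStarS X
    · exact not_mem_image_left emb7_ne_mStar X
  have dA : Disjoint ({s(mOld ms, wStarS), s((mStarS : Agent7 U W), wOld ws)} : Finset _)
      {s((mStar : Agent7 U W), wStar)} := by
    rw [Finset.disjoint_left]
    intro p hp hq
    simp only [Finset.mem_insert, Finset.mem_singleton] at hp hq
    rcases hp with rfl | rfl
    · exact pair_ne_1 hq.symm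
    · exact pair_ne_2 hq.symm
  have dC : Disjoint ({s(mOld ms, wStarS), s((mStarS : Agent7 U W), wOld ws)} : Finset _)
      {s((mStarS : Agent7 U W), wStarS)} := by
    rw [Finset.disjoint_left]
    intro p hp hq
    simp only [Finset.mem_insert, Finset.mem_singleton] at hp hq
    rcases hp with rfl | rfl
    · exact pair_ne_5 hq
    · exact pair_ne_6 hq
  have dB : Disjoint ({s((mStarS : Agent7 U W), wStarS)} : Finset _)
      {s((mStar : Agent7 U W), wStar)} :=
    Finset.disjoint_singleton.mpr pair_ne_3.symm
  rw [e1, e2, symmDiff_union_union (d1 N) (d2 N) (d1 Ns) (d2 Ns),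
    symmDiff_union_union dA dA dB dB, symmDiff_self, Finset.bot_eq_empty,
    Finset.union_empty, ← Finset.image_symmDiff _ _ (Sym2.map.injective emb7_inj),
    Disjoint.symmDiff_eq_sup dC, Finset.sup_eq_union]
  rw [Finset.card_union_of_disjoint, Finset.card_union_of_disjoint dC,
    Finset.card_image_of_injective _ (Sym2.map.injective emb7_inj)]
  · rw [Finset.card_insert_of_notMem (by simp [Sym2.eq_iff, mOld, wOld, mStarS, wStarS]),
      Finset.card_singleton, Finset.card_singleton]
  · apply dimg
    intro p hp
    simp only [Finset.mem_union, Finset.mem_insert, Finset.mem_singleton] at hp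
    rcases hp with (rfl | rfl) | rfl
    · exact not_mem_image_right emb7_ne_wStarS _
    · exact not_mem_image_left emb7_ne_mStarS _
    · exact not_mem_image_left emb7_ne_mStarS _

lemma emb7_inl (u : U) : (emb7 (Sum.inl u) : Agent7 U W) = mOld u := rfl
lemma emb7_inr (w : W) : (emb7 (Sum.inr w) : Agent7 U W) = wOld w := rfl

lemma blocks_symm {A : Type*} {Q : PrefProfile A} {M : Finset (Sym2 A)} {a b : A}
    (h : Blocks Q M a b) : Blocks Q M b a := ⟨h.2.1, h.1, h.2.2.2, h.2.2.1⟩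

lemma agent7_cases (x : Agent7 U W) :
    (∃ u, x = mOld u) ∨ x = mStar ∨ x = mStarS ∨
    (∃ w, x = wOld w) ∨ x = wStar ∨ x = wStarS := by
  rcases x with (u | i) | (w | i)
  · exact Or.inl ⟨u, rfl⟩
  · fin_cases i
    · exact Or.inr (Or.inl rfl)
    · exact Or.inr (Or.inr (Or.inl rfl))
  · exact Or.inr (Or.inr (Or.inr (Or.inl ⟨w, rfl⟩)))
  · fin_cases i
    · exact Or.inr (Or.inr (Or.inr (Or.inr (Or.inl rfl))))
    · exact Or.inr (Or.inr (Or.inr (Or.inr (Or.inr rfl))))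


lemma M1_stable {N : Finset (Sym2 (U ⊕ W))}
    (hl : P.Lawful)
    (hbU : ∀ u : U, ∀ x ∈ P.acc (Sum.inl u), ∃ w : W, x = Sum.inr w)
    (hbW : ∀ w : W, ∀ x ∈ P.acc (Sum.inr w), ∃ u : U, x = Sum.inl u)
    (hN : IsStable P N)
    (hunm : ∀ a : U ⊕ W, ¬ Matched N a ↔ (a = Sum.inl ms ∨ a = Sum.inr ws)) :
    IsStable (prof7 P om ow ms ws false) (M1def7 N ms ws) := by
  have hmsu : ¬ Matched N (Sum.inl ms) := (hunm _).mpr (Or.inl rfl)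
  have hwsu : ¬ Matched N (Sum.inr ws) := (hunm _).mpr (Or.inr rfl)
  have hm1 : s((mStar : Agent7 U W), wStar) ∈ M1def7 N ms ws :=
    mem_M1.mpr (Or.inr (Or.inl ⟨rfl, rfl⟩))
  have hm2 : s(mOld ms, (wStarS : Agent7 U W)) ∈ M1def7 N ms ws :=
    mem_M1.mpr (Or.inr (Or.inr (Or.inr (Or.inl ⟨rfl, rfl⟩))))
  have hm3 : s((mStarS : Agent7 U W), wOld ws) ∈ M1def7 N ms ws :=
    mem_M1.mpr (Or.inr (Or.inr (Or.inr (Or.inr (Or.inr (Or.inl ⟨rfl, rfl⟩))))))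
  refine ⟨M1_matching hN.1 hmsu hwsu, ?_, ?_⟩
  · -- acceptable
    intro a b hab
    rcases mem_M1.mp hab with ⟨a1, b1, hn, rfl, rfl⟩ | ⟨rfl, rfl⟩ | ⟨rfl, rfl⟩ | ⟨rfl, rfl⟩ |
      ⟨rfl, rfl⟩ | ⟨rfl, rfl⟩ | ⟨rfl, rfl⟩
    · have hacc := hN.2.1 _ _ hn
      rcases a1 with u | w
      · exact acc_mOld.mpr (Or.inl ⟨b1, hacc, rfl⟩)
      · exact acc_wOld.mpr (Or.inl ⟨b1, hacc, rfl⟩)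
    · exact acc_mStar.mpr (Or.inr rfl)
    · exact acc_wStar.mpr (Or.inr rfl)
    · exact acc_mOld.mpr (Or.inr (Or.inr ⟨rfl, rfl⟩))
    · exact acc_wStarS.mpr (Or.inr rfl)
    · exact acc_mStarS.mpr (Or.inl rfl)
    · exact acc_wOld.mpr (Or.inr (Or.inr ⟨rfl, rfl⟩))
  · -- no blocking pairs
    have main : ∀ (u : U) (b : Agent7 U W),
        ¬ Blocks (prof7 P om ow ms ws false) (M1def7 N ms ws) (mOld u) b := by
      intro u b hb
      obtain ⟨hacc1, hacc2, hpa, hpb⟩ := hb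
      by_cases hu : u = ms
      · subst hu
        have := hpa _ hm2
        simp only [PrefProfile.Prefers, rk3] at this
        omega
      · have hmat : Matched N (Sum.inl u) := by
          by_contra h
          rcases (hunm _).mp h with h' | h'
          · exact hu (Sum.inl.inj h')
          · simp at h'
        obtain ⟨x0, hx0⟩ := hmat
        obtain ⟨w0, rfl⟩ := hbU u x0 (hN.2.1 _ _ hx0)
        have hpair : s(mOld u, wOld w0) ∈ M1def7 N ms ws :=
          mem_M1.mpr (Or.inl ⟨_, _, hx0, rfl, rfl⟩)
        have hpref := hpa _ hpair
        rcases acc_mOld.mp hacc1 with ⟨x, hx, rfl⟩ | rfl | ⟨rfl, rfl⟩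
        · obtain ⟨w, rfl⟩ := hbU u x hx
          apply hN.2.2 (Sum.inl u) (Sum.inr w)
          refine ⟨hx, hl.2 _ _ hx, ?_, ?_⟩
          · intro c hc
            have hceq : c = Sum.inr w0 := hN.1.2 _ _ _ hc hx0
            subst hceq
            simp only [PrefProfile.Prefers, emb7_inr, rk1] at hpref
            simp only [PrefProfile.Prefers]
            omega
          · intro c hc
            obtain ⟨u'', rfl⟩ := hbW w c (hN.2.1 _ _ hc)
            have hc7 : s(wOld w, mOld u'') ∈ M1def7 N ms ws :=
              mem_M1.mpr (Or.inl ⟨_, _, hc, rfl, rfl⟩)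
            have := hpb _ hc7
            simp only [PrefProfile.Prefers, emb7_inr, rk8] at this
            simp only [PrefProfile.Prefers]
            omega
        · have hle : P.rank (Sum.inl u) (Sum.inr w0) ≤
              (P.acc (Sum.inl u)).sup (P.rank (Sum.inl u)) :=
            Finset.le_sup (hN.2.1 _ _ hx0)
          simp only [PrefProfile.Prefers, rk1, rk2] at hpref
          omega
        · exact hu rfl
    have mainStar : ∀ b : Agent7 U W,
        ¬ Blocks (prof7 P om ow ms ws false) (M1def7 N ms ws) mStar b := by
      intro b hb
      obtain ⟨hacc1, hacc2, hpa, hpb⟩ := hb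
      rcases acc_mStar.mp hacc1 with ⟨w, rfl⟩ | rfl
      · by_cases hw : w = ws
        · have hc7 : s(wOld w, (mStarS : Agent7 U W)) ∈ M1def7 N ms ws := by
            rw [hw, Sym2.eq_swap]; exact hm3
          have := hpb _ hc7
          simp only [PrefProfile.Prefers, rk9, rk10] at this
          omega
        · have hmat : Matched N (Sum.inr w) := by
            by_contra h
            rcases (hunm _).mp h with h' | h'
            · simp at h'
            · exact hw (Sum.inr.inj h')
          obtain ⟨x0, hx0⟩ := hmat
          obtain ⟨u0, rfl⟩ := hbW w x0 (hN.2.1 _ _ hx0)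
          have hc7 : s(wOld w, mOld u0) ∈ M1def7 N ms ws :=
            mem_M1.mpr (Or.inl ⟨_, _, hx0, rfl, rfl⟩)
          have := hpb _ hc7
          simp only [PrefProfile.Prefers, rk8, rk9] at this
          have hle : P.rank (Sum.inr w) (Sum.inl u0) ≤
              (P.acc (Sum.inr w)).sup (P.rank (Sum.inr w)) :=
            Finset.le_sup (hN.2.1 _ _ hx0)
          omega
      · have := hpa _ hm1
        simp [PrefProfile.Prefers] at this
    have mainStarS : ∀ b : Agent7 U W,
        ¬ Blocks (prof7 P om ow ms ws false) (M1def7 N ms ws) mStarS b := by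
      intro b hb
      obtain ⟨hacc1, hacc2, hpa, hpb⟩ := hb
      have := hpa _ hm3
      rcases acc_mStarS.mp hacc1 with rfl | rfl
      · simp [PrefProfile.Prefers] at this
      · simp only [PrefProfile.Prefers, rk6, rk7, Bool.false_eq_true, if_false] at this
        omega
    intro a b hb
    have hacc1 := hb.1
    rcases agent7_cases a with ⟨u, rfl⟩ | rfl | rfl | ⟨w, rfl⟩ | rfl | rfl
    · exact main u b hb
    · exact mainStar b hb
    · exact mainStarS b hb
    · rcases acc_wOld.mp hacc1 with ⟨x, hx, rfl⟩ | rfl | ⟨rfl, rfl⟩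
      · obtain ⟨u, rfl⟩ := hbW w x hx
        exact main u _ (blocks_symm hb)
      · exact mainStar _ (blocks_symm hb)
      · exact mainStarS _ (blocks_symm hb)
    · rcases acc_wStar.mp hacc1 with ⟨u, rfl⟩ | rfl
      · exact main u _ (blocks_symm hb)
      · exact mainStar _ (blocks_symm hb)
    · rcases acc_wStarS.mp hacc1 with rfl | rfl
      · exact mainStarS _ (blocks_symm hb)
      · exact main ms _ (blocks_symm hb)

lemma M2_stable {Ns : Finset (Sym2 (U ⊕ W))}
    (hl : P.Lawful)
    (hbU : ∀ u : U, ∀ x ∈ P.acc (Sum.inl u), ∃ w : W, x = Sum.inr w)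
    (hbW : ∀ w : W, ∀ x ∈ P.acc (Sum.inr w), ∃ u : U, x = Sum.inl u)
    (hNs : IsStable P Ns) (hperf : IsPerfect Ns) :
    IsStable (prof7 P om ow ms ws true) (M2def7 Ns) := by
  have hm1 : s((mStar : Agent7 U W), wStar) ∈ M2def7 Ns :=
    mem_M2.mpr (Or.inr (Or.inl ⟨rfl, rfl⟩))
  have hm2 : s((mStarS : Agent7 U W), (wStarS : Agent7 U W)) ∈ M2def7 Ns :=
    mem_M2.mpr (Or.inr (Or.inr (Or.inr (Or.inl ⟨rfl, rfl⟩))))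
  have mman : ∀ u : U, ∃ w0 : W, s(Sum.inl u, Sum.inr w0) ∈ Ns := by
    intro u
    obtain ⟨x0, hx0⟩ := hperf (Sum.inl u)
    obtain ⟨w0, rfl⟩ := hbU u x0 (hNs.2.1 _ _ hx0)
    exact ⟨w0, hx0⟩
  have mwom : ∀ w : W, ∃ u0 : U, s(Sum.inr w, Sum.inl u0) ∈ Ns := by
    intro w
    obtain ⟨x0, hx0⟩ := hperf (Sum.inr w)
    obtain ⟨u0, rfl⟩ := hbW w x0 (hNs.2.1 _ _ hx0)
    exact ⟨u0, hx0⟩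
  refine ⟨M2_matching hNs.1, ?_, ?_⟩
  · intro a b hab
    rcases mem_M2.mp hab with ⟨a1, b1, hn, rfl, rfl⟩ | ⟨rfl, rfl⟩ | ⟨rfl, rfl⟩ |
      ⟨rfl, rfl⟩ | ⟨rfl, rfl⟩
    · have hacc := hNs.2.1 _ _ hn
      rcases a1 with u | w
      · exact acc_mOld.mpr (Or.inl ⟨b1, hacc, rfl⟩)
      · exact acc_wOld.mpr (Or.inl ⟨b1, hacc, rfl⟩)
    · exact acc_mStar.mpr (Or.inr rfl)
    · exact acc_wStar.mpr (Or.inr rfl)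
    · exact acc_mStarS.mpr (Or.inr rfl)
    · exact acc_wStarS.mpr (Or.inl rfl)
  · have main : ∀ (u : U) (b : Agent7 U W),
        ¬ Blocks (prof7 P om ow ms ws true) (M2def7 Ns) (mOld u) b := by
      intro u b hb
      obtain ⟨hacc1, hacc2, hpa, hpb⟩ := hb
      obtain ⟨w0, hx0⟩ := mman u
      have hpair : s(mOld u, wOld w0) ∈ M2def7 Ns :=
        mem_M2.mpr (Or.inl ⟨_, _, hx0, rfl, rfl⟩)
      have hpref := hpa _ hpair
      rcases acc_mOld.mp hacc1 with ⟨x, hx, rfl⟩ | rfl | ⟨rfl, rfl⟩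
      · obtain ⟨w, rfl⟩ := hbU u x hx
        apply hNs.2.2 (Sum.inl u) (Sum.inr w)
        refine ⟨hx, hl.2 _ _ hx, ?_, ?_⟩
        · intro c hc
          have hceq : c = Sum.inr w0 := hNs.1.2 _ _ _ hc hx0
          subst hceq
          simp only [PrefProfile.Prefers, emb7_inr, rk1] at hpref
          simp only [PrefProfile.Prefers]
          omega
        · intro c hc
          obtain ⟨u'', rfl⟩ := hbW w c (hNs.2.1 _ _ hc)
          have hc7 : s(wOld w, mOld u'') ∈ M2def7 Ns :=
            mem_M2.mpr (Or.inl ⟨_, _, hc, rfl, rfl⟩)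
          have := hpb _ hc7
          simp only [PrefProfile.Prefers, emb7_inr, rk8] at this
          simp only [PrefProfile.Prefers]
          omega
      · have hle : P.rank (Sum.inl u) (Sum.inr w0) ≤
            (P.acc (Sum.inl u)).sup (P.rank (Sum.inl u)) :=
          Finset.le_sup (hNs.2.1 _ _ hx0)
        simp only [PrefProfile.Prefers, rk1, rk2] at hpref
        omega
      · have hc7 : s((wStarS : Agent7 U W), (mStarS : Agent7 U W)) ∈ M2def7 Ns := by
          rw [Sym2.eq_swap]; exact hm2
        have := hpb _ hc7
        simp only [PrefProfile.Prefers, rk13, rk14] at this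
        omega
    have mainStar : ∀ b : Agent7 U W,
        ¬ Blocks (prof7 P om ow ms ws true) (M2def7 Ns) mStar b := by
      intro b hb
      obtain ⟨hacc1, hacc2, hpa, hpb⟩ := hb
      rcases acc_mStar.mp hacc1 with ⟨w, rfl⟩ | rfl
      · obtain ⟨u0, hx0⟩ := mwom w
        have hc7 : s(wOld w, mOld u0) ∈ M2def7 Ns :=
          mem_M2.mpr (Or.inl ⟨_, _, hx0, rfl, rfl⟩)
        have := hpb _ hc7
        simp only [PrefProfile.Prefers, rk8, rk9] at this
        have hle : P.rank (Sum.inr w) (Sum.inl u0) ≤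
            (P.acc (Sum.inr w)).sup (P.rank (Sum.inr w)) :=
          Finset.le_sup (hNs.2.1 _ _ hx0)
        omega
      · have := hpa _ hm1
        simp [PrefProfile.Prefers] at this
    have mainStarS : ∀ b : Agent7 U W,
        ¬ Blocks (prof7 P om ow ms ws true) (M2def7 Ns) mStarS b := by
      intro b hb
      obtain ⟨hacc1, hacc2, hpa, hpb⟩ := hb
      have := hpa _ hm2
      rcases acc_mStarS.mp hacc1 with rfl | rfl
      · simp only [PrefProfile.Prefers, rk6, rk7, if_true] at this
        omega
      · simp [PrefProfile.Prefers] at this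
    intro a b hb
    have hacc1 := hb.1
    rcases agent7_cases a with ⟨u, rfl⟩ | rfl | rfl | ⟨w, rfl⟩ | rfl | rfl
    · exact main u b hb
    · exact mainStar b hb
    · exact mainStarS b hb
    · rcases acc_wOld.mp hacc1 with ⟨x, hx, rfl⟩ | rfl | ⟨rfl, rfl⟩
      · obtain ⟨u, rfl⟩ := hbW w x hx
        exact main u _ (blocks_symm hb)
      · exact mainStar _ (blocks_symm hb)
      · exact mainStarS _ (blocks_symm hb)
    · rcases acc_wStar.mp hacc1 with ⟨u, rfl⟩ | rfl
      · exact main u _ (blocks_symm hb)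
      · exact mainStar _ (blocks_symm hb)
    · rcases acc_wStarS.mp hacc1 with rfl | rfl
      · exact mainStarS _ (blocks_symm hb)
      · exact main ms _ (blocks_symm hb)


/-- The reduction from finding a close perfect weakly stable matching in an SM-T
instance to ISMFE-T restricted to one forced pair `{m*, w*}`: `M1` is weakly stable
w.r.t. `P1`, and the original instance has a perfect weakly stable matching `N*`
with `|N △ N*| ≤ ℓ` iff the constructed instance has a weakly stable matching `M2`
(w.r.t. `P2`) containing `{m*, w*}` with `|M1 △ M2| ≤ ℓ + 3`. -/
theorem stmt7 (P : PrefProfile (U ⊕ W)) (hl : P.Lawful)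
    (hbU : ∀ u : U, ∀ x ∈ P.acc (Sum.inl u), ∃ w : W, x = Sum.inr w)
    (hbW : ∀ w : W, ∀ x ∈ P.acc (Sum.inr w), ∃ u : U, x = Sum.inl u)
    (n : ℕ) (hU : Fintype.card U = n) (hW : Fintype.card W = n)
    (N : Finset (Sym2 (U ⊕ W))) (hN : IsStable P N) (hNcard : N.card + 1 = n)
    (ms : U) (ws : W)
    (hunm : ∀ a : U ⊕ W, ¬ Matched N a ↔ (a = Sum.inl ms ∨ a = Sum.inr ws))
    (ℓ : ℕ) (om : U → ℕ) (ow : W → ℕ)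
    (hom : Function.Injective om) (how : Function.Injective ow) :
    IsStable (prof7 P om ow ms ws false) (M1def7 N ms ws) ∧
    ((∃ Nstar, IsStable P Nstar ∧ IsPerfect Nstar ∧ (symmDiff N Nstar).card ≤ ℓ) ↔
     (∃ M2, IsStable (prof7 P om ow ms ws true) M2 ∧
        s((mStar : Agent7 U W), wStar) ∈ M2 ∧
        (symmDiff (M1def7 N ms ws) M2).card ≤ ℓ + 3)) := by
  refine ⟨M1_stable hl hbU hbW hN hunm, ?_, ?_⟩
  · rintro ⟨Ns, hNs, hperf, hcard⟩
    refine ⟨M2def7 Ns, M2_stable hl hbU hbW hNs hperf,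
      mem_M2.mpr (Or.inr (Or.inl ⟨rfl, rfl⟩)), ?_⟩
    rw [symmDiff_M1_M2]
    omega
  · rintro ⟨M2, hM2, hmw, hcard⟩
    have hmw' : s((wStar : Agent7 U W), mStar) ∈ M2 := by rw [Sym2.eq_swap]; exact hmw
    have hSS : s((mStarS : Agent7 U W), (wStarS : Agent7 U W)) ∈ M2 := by
      by_contra h
      apply hM2.2.2 mStarS wStarS
      refine ⟨acc_mStarS.mpr (Or.inr rfl), acc_wStarS.mpr (Or.inl rfl), ?_, ?_⟩
      · intro c hc
        rcases acc_mStarS.mp (hM2.2.1 _ _ hc) with rfl | rfl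
        · simp only [PrefProfile.Prefers, rk6, rk7, if_true]
          omega
        · exact absurd hc h
      · intro c hc
        rcases acc_wStarS.mp (hM2.2.1 _ _ hc) with rfl | rfl
        · exact absurd (by rwa [Sym2.eq_swap] at hc) h
        · simp only [PrefProfile.Prefers, rk13, rk14]
          omega
    have hSS' : s((wStarS : Agent7 U W), (mStarS : Agent7 U W)) ∈ M2 := by
      rw [Sym2.eq_swap]; exact hSS
    have hman : ∀ u : U, ∃ w : W, s(mOld u, wOld w) ∈ M2 := by
      intro u
      have hmat : ∃ c, s(mOld u, c) ∈ M2 := by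
        by_contra h
        push_neg at h
        apply hM2.2.2 (mOld u) wStar
        refine ⟨acc_mOld.mpr (Or.inr (Or.inl rfl)), acc_wStar.mpr (Or.inl ⟨u, rfl⟩), ?_, ?_⟩
        · intro c hc
          exact absurd hc (h c)
        · intro c hc
          have hceq : c = mStar := hM2.1.2 _ _ _ hc hmw'
          subst hceq
          have hle : om u ≤ Finset.univ.sup om := Finset.le_sup (Finset.mem_univ u)
          simp only [PrefProfile.Prefers, rk11, rk12]
          omega
      obtain ⟨c, hc⟩ := hmat
      rcases acc_mOld.mp (hM2.2.1 _ _ hc) with ⟨x, hx, rfl⟩ | rfl | ⟨rfl, rfl⟩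
      · obtain ⟨w, rfl⟩ := hbU u x hx
        exact ⟨w, hc⟩
      · exact absurd (hM2.1.2 wStar _ _ (by rwa [Sym2.eq_swap] at hc) hmw')
          (by simp [mOld, mStar])
      · exact absurd (hM2.1.2 wStarS _ _ (by rwa [Sym2.eq_swap] at hc) hSS')
          (by simp [mOld, mStarS])
    have hwom : ∀ w : W, ∃ u : U, s(wOld w, mOld u) ∈ M2 := by
      intro w
      have hmat : ∃ c, s(wOld w, c) ∈ M2 := by
        by_contra h
        push_neg at h
        apply hM2.2.2 (wOld w) mStar
        refine ⟨acc_wOld.mpr (Or.inr (Or.inl rfl)), acc_mStar.mpr (Or.inl ⟨w, rfl⟩), ?_, ?_⟩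
        · intro c hc
          exact absurd hc (h c)
        · intro c hc
          have hceq : c = wStar := hM2.1.2 _ _ _ hc hmw
          subst hceq
          have hle : ow w ≤ Finset.univ.sup ow := Finset.le_sup (Finset.mem_univ w)
          simp only [PrefProfile.Prefers, rk4, rk5]
          omega
      obtain ⟨c, hc⟩ := hmat
      rcases acc_wOld.mp (hM2.2.1 _ _ hc) with ⟨x, hx, rfl⟩ | rfl | ⟨rfl, rfl⟩
      · obtain ⟨u, rfl⟩ := hbW w x hx
        exact ⟨u, hc⟩
      · exact absurd (hM2.1.2 mStar _ _ (by rwa [Sym2.eq_swap] at hc) hmw)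
          (by simp [wOld, wStar])
      · exact absurd (hM2.1.2 mStarS _ _ (by rwa [Sym2.eq_swap] at hc) hSS)
          (by simp [wOld, wStarS])
    set Ns : Finset (Sym2 (U ⊕ W)) :=
      Finset.univ.filter (fun p => Sym2.map emb7 p ∈ M2) with hNsdef
    have mem_Ns : ∀ a b : U ⊕ W, (s(a, b) ∈ Ns ↔ s(emb7 a, emb7 b) ∈ M2) := by
      intro a b
      rw [hNsdef]
      simp [Sym2.map_pair_eq]
    have hM2eq : M2 = M2def7 Ns := by
      ext p
      induction p using Sym2.ind with
      | _ x y =>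
        constructor
        · intro hp
          have haccy := hM2.2.1 x y hp
          rcases agent7_cases x with ⟨u, rfl⟩ | rfl | rfl | ⟨w, rfl⟩ | rfl | rfl
          · rcases acc_mOld.mp haccy with ⟨x', hx', rfl⟩ | rfl | ⟨rfl, rfl⟩
            · exact mem_M2.mpr (Or.inl ⟨Sum.inl u, x', (mem_Ns _ _).mpr hp, rfl, rfl⟩)
            · exact absurd (hM2.1.2 wStar _ _ (by rwa [Sym2.eq_swap] at hp) hmw')
                (by simp [mOld, mStar])
            · exact absurd (hM2.1.2 wStarS _ _ (by rwa [Sym2.eq_swap] at hp) hSS')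
                (by simp [mOld, mStarS])
          · rcases acc_mStar.mp haccy with ⟨w, rfl⟩ | rfl
            · obtain ⟨u0, hu0⟩ := hwom w
              exact absurd (hM2.1.2 (wOld w) mStar (mOld u0) (by rwa [Sym2.eq_swap] at hp) hu0)
                (by simp [mStar, mOld])
            · exact mem_M2.mpr (Or.inr (Or.inl ⟨rfl, rfl⟩))
          · rcases acc_mStarS.mp haccy with rfl | rfl
            · obtain ⟨u0, hu0⟩ := hwom ws
              exact absurd (hM2.1.2 (wOld ws) mStarS (mOld u0) (by rwa [Sym2.eq_swap] at hp) hu0)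
                (by simp [mStarS, mOld])
            · exact mem_M2.mpr (Or.inr (Or.inr (Or.inr (Or.inl ⟨rfl, rfl⟩))))
          · rcases acc_wOld.mp haccy with ⟨x', hx', rfl⟩ | rfl | ⟨rfl, rfl⟩
            · exact mem_M2.mpr (Or.inl ⟨Sum.inr w, x', (mem_Ns _ _).mpr hp, rfl, rfl⟩)
            · exact absurd (hM2.1.2 mStar _ _ (by rwa [Sym2.eq_swap] at hp) hmw)
                (by simp [wOld, wStar])
            · exact absurd (hM2.1.2 mStarS _ _ (by rwa [Sym2.eq_swap] at hp) hSS)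
                (by simp [wOld, wStarS])
          · rcases acc_wStar.mp haccy with ⟨u, rfl⟩ | rfl
            · obtain ⟨w0, hw0⟩ := hman u
              exact absurd (hM2.1.2 (mOld u) wStar (wOld w0) (by rwa [Sym2.eq_swap] at hp) hw0)
                (by simp [wStar, wOld])
            · exact mem_M2.mpr (Or.inr (Or.inr (Or.inl ⟨rfl, rfl⟩)))
          · rcases acc_wStarS.mp haccy with rfl | rfl
            · exact mem_M2.mpr (Or.inr (Or.inr (Or.inr (Or.inr ⟨rfl, rfl⟩))))
            · obtain ⟨w0, hw0⟩ := hman ms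
              exact absurd (hM2.1.2 (mOld ms) wStarS (wOld w0) (by rwa [Sym2.eq_swap] at hp) hw0)
                (by simp [wStarS, wOld])
        · intro hp
          rcases mem_M2.mp hp with ⟨a, b, hab, rfl, rfl⟩ | ⟨rfl, rfl⟩ | ⟨rfl, rfl⟩ |
            ⟨rfl, rfl⟩ | ⟨rfl, rfl⟩
          · exact (mem_Ns _ _).mp hab
          · exact hmw
          · exact hmw'
          · exact hSS
          · exact hSS'
    have hNsM : IsMatching Ns := by
      constructor
      · intro p hp
        induction p using Sym2.ind with
        | _ a b =>
          intro hd
          rw [Sym2.mk_isDiag_iff] at hd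
          subst hd
          exact hM2.1.1 _ ((mem_Ns _ _).mp hp) (Sym2.mk_isDiag_iff.mpr rfl)
      · intro a b c h1 h2
        exact emb7_inj (hM2.1.2 _ _ _ ((mem_Ns _ _).mp h1) ((mem_Ns _ _).mp h2))
    have hNsAcc : Acceptable P Ns := by
      intro a b hab
      have h7 := hM2.2.1 _ _ ((mem_Ns _ _).mp hab)
      rcases a with u | w
      · rcases acc_mOld.mp h7 with ⟨x', hx', hxx⟩ | hxx | ⟨_, hxx⟩
        · rwa [emb7_inj hxx] at hx'
        · exact absurd hxx (emb7_ne_wStar b)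
        · exact absurd hxx (emb7_ne_wStarS b)
      · rcases acc_wOld.mp h7 with ⟨x', hx', hxx⟩ | hxx | ⟨_, hxx⟩
        · rwa [emb7_inj hxx] at hx'
        · exact absurd hxx (emb7_ne_mStar b)
        · exact absurd hxx (emb7_ne_mStarS b)
    have hNsPerf : IsPerfect Ns := by
      intro a
      rcases a with u | w
      · obtain ⟨w, hw⟩ := hman u
        exact ⟨Sum.inr w, (mem_Ns _ _).mpr hw⟩
      · obtain ⟨u, hu⟩ := hwom w
        exact ⟨Sum.inl u, (mem_Ns _ _).mpr hu⟩
    have hNsBlocks : ∀ a b, ¬ Blocks P Ns a b := by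
      have mainB : ∀ (u : U) (w : W), ¬ Blocks P Ns (Sum.inl u) (Sum.inr w) := by
        intro u w hb
        obtain ⟨hb1, hb2, hb3, hb4⟩ := hb
        apply hM2.2.2 (mOld u) (wOld w)
        refine ⟨acc_mOld.mpr (Or.inl ⟨_, hb1, rfl⟩), acc_wOld.mpr (Or.inl ⟨_, hb2, rfl⟩), ?_, ?_⟩
        · intro c hc
          obtain ⟨w0, hw0⟩ := hman u
          have hceq : c = wOld w0 := hM2.1.2 _ _ _ hc hw0
          subst hceq
          have := hb3 _ ((mem_Ns (Sum.inl u) (Sum.inr w0)).mpr hw0)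
          simp only [PrefProfile.Prefers, rk1] at this ⊢
          omega
        · intro c hc
          obtain ⟨u0, hu0⟩ := hwom w
          have hceq : c = mOld u0 := hM2.1.2 _ _ _ hc hu0
          subst hceq
          have := hb4 _ ((mem_Ns (Sum.inr w) (Sum.inl u0)).mpr hu0)
          simp only [PrefProfile.Prefers, rk8] at this ⊢
          omega
      intro a b hb
      rcases a with u | w
      · obtain ⟨w, rfl⟩ := hbU u b hb.1
        exact mainB u w hb
      · obtain ⟨u, rfl⟩ := hbW w b hb.1
        exact mainB u w (blocks_symm hb)
    refine ⟨Ns, ⟨hNsM, hNsAcc, hNsBlocks⟩, hNsPerf, ?_⟩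
    rw [hM2eq, symmDiff_M1_M2] at hcard
    omega
end
end

section
/- In the Incremental Stable Roommates construction from an ℓ-partite r-regular graph defined in the context, the matching M1 is stable with respect to the preference profile P1. -/
/-- The agents of the constructed ISR instance: for every color `c ∈ [ℓ]` the agents
`s^c, s̄^c, t^c, t̄^c, u^c, ū^c`; for every color `c` and vertex index `i ∈ [ν]` the
agents `a^c_{i,j}` (`V c i j`) and `ā^c_{i,j}` (`Vb c i j`) for `j ∈ {1,2,3,4}`
(represented by `Fin 4`, `j = 0,1,2,3` standing for `1,2,3,4`); and for every edge
`e` the agents `a_{e,j}` (`Ed e j`). -/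
inductive Ag (ℓ ν : ℕ) (E : Type) : Type
  | S : Fin ℓ → Ag ℓ ν E
  | Sb : Fin ℓ → Ag ℓ ν E
  | T : Fin ℓ → Ag ℓ ν E
  | Tb : Fin ℓ → Ag ℓ ν E
  | U : Fin ℓ → Ag ℓ ν E
  | Ub : Fin ℓ → Ag ℓ ν E
  | V : Fin ℓ → Fin ν → Fin 4 → Ag ℓ ν E
  | Vb : Fin ℓ → Fin ν → Fin 4 → Ag ℓ ν E
  | Ed : E → Fin 4 → Ag ℓ ν E
  deriving DecidableEq

/-- The profile whose preference lists are the given lists (most preferred first);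
an agent accepts exactly the agents on its list. -/
def profOfList {α : Type*} [DecidableEq α] (pl : α → List α) : PrefProfile α where
  acc a := (pl a).toFinset
  rank a b := (pl a).idxOf b

variable {ℓ ν : ℕ} {E : Type} [DecidableEq E] [Fintype E]

/-- Edge `e` (with endpoints `(c1 e, i1 e)` and `(c2 e, i2 e)`) is incident to the
vertex `v^c_i`. -/
def Incident (c1 c2 : E → Fin ℓ) (i1 i2 : E → Fin ν) (e : E) (c : Fin ℓ) (i : Fin ν) :
    Prop :=
  (c1 e = c ∧ i1 e = i) ∨ (c2 e = c ∧ i2 e = i)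

open Ag in
/-- The preference lists of the construction; `swap = false` gives `P1` and
`swap = true` gives `P2` (they differ only in the lists of `t^c` and `t̄^c`).
`enc c i` is the arbitrary fixed strict order `[A_{δ(v^c_i),1}]` of the edges
incident to `v^c_i`. -/
def plist911 (swap : Bool) (c1 c2 : E → Fin ℓ) (i1 i2 : E → Fin ν)
    (enc : Fin ℓ → Fin ν → List E) : Ag ℓ ν E → List (Ag ℓ ν E)
  | S c => T c :: (List.finRange ν).flatMap
      (fun i => V c i 0 :: Vb c i 0 :: (enc c i).map (fun e => Ed e 0))
  | Sb c => Tb c :: (List.finRange ν).reverse.flatMap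
      (fun i => V c i 3 :: Vb c i 3 :: (enc c i).map (fun e => Ed e 0))
  | T c => if swap then [U c, S c] else [S c, U c]
  | Tb c => if swap then [Ub c, Sb c] else [Sb c, Ub c]
  | U c => [T c]
  | Ub c => [Tb c]
  | V c i j =>
      if j = 0 then [V c i 1, S c, V c i 3]
      else if j = 1 then [V c i 2, V c i 0]
      else if j = 2 then [V c i 3, V c i 1]
      else [V c i 0, Sb c, V c i 2]
  | Vb c i j =>
      if j = 0 then [Vb c i 1, S c, Vb c i 3]
      else if j = 1 then [Vb c i 2, Vb c i 0]
      else if j = 2 then [Vb c i 3, Vb c i 1]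
      else [Vb c i 0, Sb c, Vb c i 2]
  | Ed e j =>
      if j = 0 then [Ed e 1, S (c1 e), Sb (c1 e), S (c2 e), Sb (c2 e), Ed e 3]
      else if j = 1 then [Ed e 2, Ed e 0]
      else if j = 2 then [Ed e 3, Ed e 1]
      else [Ed e 0, Ed e 2]

open Ag in
/-- The initial matching `M1`. -/
def M1g : Finset (Sym2 (Ag ℓ ν E)) :=
  (Finset.univ.image fun c : Fin ℓ => s(S c, T c)) ∪
  (Finset.univ.image fun c : Fin ℓ => s(Sb c, Tb c)) ∪
  (Finset.univ.image fun p : Fin ℓ × Fin ν => s(V p.1 p.2 0, V p.1 p.2 1)) ∪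
  (Finset.univ.image fun p : Fin ℓ × Fin ν => s(V p.1 p.2 2, V p.1 p.2 3)) ∪
  (Finset.univ.image fun p : Fin ℓ × Fin ν => s(Vb p.1 p.2 0, Vb p.1 p.2 3)) ∪
  (Finset.univ.image fun p : Fin ℓ × Fin ν => s(Vb p.1 p.2 1, Vb p.1 p.2 2)) ∪
  (Finset.univ.image fun e : E => s(Ed e 0, Ed e 3)) ∪
  (Finset.univ.image fun e : E => s(Ed e 1, Ed e 2))


section Aux
open Ag

variable {ℓ ν : ℕ} {E : Type} [DecidableEq E] [Fintype E]

/-- The partner function of `M1g`. -/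
private def pf : Ag ℓ ν E → Ag ℓ ν E
  | S c => T c
  | T c => S c
  | Sb c => Tb c
  | Tb c => Sb c
  | U c => U c
  | Ub c => Ub c
  | V c i j => V c i (if j = 0 then 1 else if j = 1 then 0 else if j = 2 then 3 else 2)
  | Vb c i j => Vb c i (if j = 0 then 3 else if j = 1 then 2 else if j = 2 then 1 else 0)
  | Ed e j => Ed e (if j = 0 then 3 else if j = 1 then 2 else if j = 2 then 1 else 0)

private lemma mem_M1g_partner {a b : Ag ℓ ν E} (h : s(a, b) ∈ M1g) : b = pf a := by
  simp only [M1g, Finset.mem_union, Finset.mem_image, Finset.mem_univ, true_and] at h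
  rcases h with (((((((⟨c, hc⟩ | ⟨c, hc⟩) | ⟨p, hc⟩) | ⟨p, hc⟩) | ⟨p, hc⟩) | ⟨p, hc⟩) |
      ⟨e, hc⟩) | ⟨e, hc⟩) <;>
    rw [Sym2.eq_iff] at hc <;>
    rcases hc with ⟨h1, h2⟩ | ⟨h1, h2⟩ <;> subst h1 <;> subst h2 <;> simp [pf]

private lemma hST (c : Fin ℓ) : s(S c, T c) ∈ (M1g : Finset (Sym2 (Ag ℓ ν E))) := by
  simp only [M1g, Finset.mem_union, Finset.mem_image, Finset.mem_univ, true_and]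
  exact Or.inl (Or.inl (Or.inl (Or.inl (Or.inl (Or.inl (Or.inl ⟨c, rfl⟩))))))

private lemma hSbTb (c : Fin ℓ) : s(Sb c, Tb c) ∈ (M1g : Finset (Sym2 (Ag ℓ ν E))) := by
  simp only [M1g, Finset.mem_union, Finset.mem_image, Finset.mem_univ, true_and]
  exact Or.inl (Or.inl (Or.inl (Or.inl (Or.inl (Or.inl (Or.inr ⟨c, rfl⟩))))))

private lemma hV01 (c : Fin ℓ) (i : Fin ν) :
    s(V c i 0, V c i 1) ∈ (M1g : Finset (Sym2 (Ag ℓ ν E))) := by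
  simp only [M1g, Finset.mem_union, Finset.mem_image, Finset.mem_univ, true_and]
  exact Or.inl (Or.inl (Or.inl (Or.inl (Or.inl (Or.inr ⟨(c, i), rfl⟩)))))

private lemma hV23 (c : Fin ℓ) (i : Fin ν) :
    s(V c i 2, V c i 3) ∈ (M1g : Finset (Sym2 (Ag ℓ ν E))) := by
  simp only [M1g, Finset.mem_union, Finset.mem_image, Finset.mem_univ, true_and]
  exact Or.inl (Or.inl (Or.inl (Or.inl (Or.inr ⟨(c, i), rfl⟩))))

private lemma hVb03 (c : Fin ℓ) (i : Fin ν) :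
    s(Vb c i 0, Vb c i 3) ∈ (M1g : Finset (Sym2 (Ag ℓ ν E))) := by
  simp only [M1g, Finset.mem_union, Finset.mem_image, Finset.mem_univ, true_and]
  exact Or.inl (Or.inl (Or.inl (Or.inr ⟨(c, i), rfl⟩)))

private lemma hVb12 (c : Fin ℓ) (i : Fin ν) :
    s(Vb c i 1, Vb c i 2) ∈ (M1g : Finset (Sym2 (Ag ℓ ν E))) := by
  simp only [M1g, Finset.mem_union, Finset.mem_image, Finset.mem_univ, true_and]
  exact Or.inl (Or.inl (Or.inr ⟨(c, i), rfl⟩))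

private lemma hE03 (e : E) :
    s(Ed e 0, Ed e 3) ∈ (M1g : Finset (Sym2 (Ag ℓ ν E))) := by
  simp only [M1g, Finset.mem_union, Finset.mem_image, Finset.mem_univ, true_and]
  exact Or.inl (Or.inr ⟨e, rfl⟩)

private lemma hE12 (e : E) :
    s(Ed e 1, Ed e 2) ∈ (M1g : Finset (Sym2 (Ag ℓ ν E))) := by
  simp only [M1g, Finset.mem_union, Finset.mem_image, Finset.mem_univ, true_and]
  exact Or.inr ⟨e, rfl⟩

private lemma M1g_not_diag :
    ∀ p ∈ (M1g : Finset (Sym2 (Ag ℓ ν E))), ¬ p.IsDiag := by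
  intro p hp
  simp only [M1g, Finset.mem_union, Finset.mem_image, Finset.mem_univ, true_and] at hp
  rcases hp with (((((((⟨c, hc⟩ | ⟨c, hc⟩) | ⟨q, hc⟩) | ⟨q, hc⟩) | ⟨q, hc⟩) | ⟨q, hc⟩) |
      ⟨e, hc⟩) | ⟨e, hc⟩) <;> subst hc <;> simp [Sym2.mk_isDiag_iff]

private lemma strong_no_block {A : Type*} (P : PrefProfile A) {M : Finset (Sym2 A)}
    {x p y : A} (hm : s(x, p) ∈ M) (hr : P.rank x p = 0)
    (h : ∀ c, s(x, c) ∈ M → P.Prefers x y c) : False := by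
  have := h p hm
  rw [PrefProfile.Prefers, hr] at this
  omega

end Aux

/-- In the multicolored-clique construction, `M1` is stable with respect to `P1`. -/
theorem stmt9 (r : ℕ) (c1 c2 : E → Fin ℓ) (i1 i2 : E → Fin ν)
    (enc : Fin ℓ → Fin ν → List E)
    (hpart : ∀ e : E, c1 e ≠ c2 e)
    (hsimple : ∀ e e' : E,
      ((c1 e = c1 e' ∧ i1 e = i1 e' ∧ c2 e = c2 e' ∧ i2 e = i2 e') ∨
       (c1 e = c2 e' ∧ i1 e = i2 e' ∧ c2 e = c1 e' ∧ i2 e = i1 e')) → e = e')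
    (hnodup : ∀ c i, (enc c i).Nodup)
    (hmem : ∀ c i e, e ∈ enc c i ↔ Incident c1 c2 i1 i2 e c i)
    (hreg : ∀ c i, (enc c i).length = r) :
    IsStable (profOfList (plist911 false c1 c2 i1 i2 enc)) (M1g (ℓ := ℓ) (ν := ν) (E := E)) := by
  refine ⟨⟨M1g_not_diag, ?_⟩, ?_, ?_⟩
  · -- pairwise disjoint
    intro a b c h1 h2
    rw [mem_M1g_partner h1, mem_M1g_partner h2]
  · -- acceptable
    intro a b h
    have hb := mem_M1g_partner h
    cases a with
    | S c => subst hb; simp [profOfList, pf, plist911]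
    | Sb c => subst hb; simp [profOfList, pf, plist911]
    | T c => subst hb; simp [profOfList, pf, plist911]
    | Tb c => subst hb; simp [profOfList, pf, plist911]
    | U c =>
      exfalso
      simp only [pf] at hb
      subst hb
      exact M1g_not_diag _ h (by simp)
    | Ub c =>
      exfalso
      simp only [pf] at hb
      subst hb
      exact M1g_not_diag _ h (by simp)
    | V c i j => subst hb; fin_cases j <;> simp [profOfList, pf, plist911]
    | Vb c i j => subst hb; fin_cases j <;> simp [profOfList, pf, plist911]
    | Ed e j => subst hb; fin_cases j <;> simp [profOfList, pf, plist911]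
  · -- no blocking pair
    intro a b hblk
    obtain ⟨hba, hab, ha, hb⟩ := hblk
    cases a with
    | S c =>
      exact strong_no_block _ (hST c) (by simp [profOfList, plist911]) ha
    | Sb c =>
      exact strong_no_block _ (hSbTb c) (by simp [profOfList, plist911]) ha
    | T c =>
      exact strong_no_block _ (Sym2.eq_swap ▸ hST c) (by simp [profOfList, plist911]) ha
    | Tb c =>
      exact strong_no_block _ (Sym2.eq_swap ▸ hSbTb c) (by simp [profOfList, plist911]) ha
    | U c =>
      simp [profOfList, plist911] at hba
      subst hba
      exact strong_no_block _ (Sym2.eq_swap ▸ hST c) (by simp [profOfList, plist911]) hb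
    | Ub c =>
      simp [profOfList, plist911] at hba
      subst hba
      exact strong_no_block _ (Sym2.eq_swap ▸ hSbTb c) (by simp [profOfList, plist911]) hb
    | V c i j =>
      fin_cases j
      · exact strong_no_block _ (hV01 c i) (by simp [profOfList, plist911]) ha
      · simp only [profOfList, plist911, List.mem_toFinset] at hba
        simp at hba
        rcases hba with rfl | rfl
        · exact strong_no_block _ (hV23 c i) (by simp [profOfList, plist911]) hb
        · exact strong_no_block _ (hV01 c i) (by simp [profOfList, plist911]) hb
      · exact strong_no_block _ (hV23 c i) (by simp [profOfList, plist911]) ha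
      · simp only [profOfList, plist911, List.mem_toFinset] at hba
        simp at hba
        rcases hba with rfl | rfl | rfl
        · exact strong_no_block _ (hV01 c i) (by simp [profOfList, plist911]) hb
        · exact strong_no_block _ (hSbTb c) (by simp [profOfList, plist911]) hb
        · exact strong_no_block _ (hV23 c i) (by simp [profOfList, plist911]) hb
    | Vb c i j =>
      fin_cases j
      · simp only [profOfList, plist911, List.mem_toFinset] at hba
        simp at hba
        rcases hba with rfl | rfl | rfl
        · exact strong_no_block _ (hVb12 c i) (by simp [profOfList, plist911]) hb
        · exact strong_no_block _ (hST c) (by simp [profOfList, plist911]) hb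
        · exact strong_no_block _ (Sym2.eq_swap ▸ hVb03 c i) (by simp [profOfList, plist911]) hb
      · exact strong_no_block _ (hVb12 c i) (by simp [profOfList, plist911]) ha
      · simp only [profOfList, plist911, List.mem_toFinset] at hba
        simp at hba
        rcases hba with rfl | rfl
        · exact strong_no_block _ (Sym2.eq_swap ▸ hVb03 c i) (by simp [profOfList, plist911]) hb
        · exact strong_no_block _ (hVb12 c i) (by simp [profOfList, plist911]) hb
      · exact strong_no_block _ (Sym2.eq_swap ▸ hVb03 c i) (by simp [profOfList, plist911]) ha
    | Ed e j =>
      fin_cases j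
      · simp only [profOfList, plist911, List.mem_toFinset] at hba
        simp at hba
        rcases hba with rfl | rfl | rfl | rfl | rfl | rfl
        · exact strong_no_block _ (hE12 e) (by simp [profOfList, plist911]) hb
        · exact strong_no_block _ (hST (c1 e)) (by simp [profOfList, plist911]) hb
        · exact strong_no_block _ (hSbTb (c1 e)) (by simp [profOfList, plist911]) hb
        · exact strong_no_block _ (hST (c2 e)) (by simp [profOfList, plist911]) hb
        · exact strong_no_block _ (hSbTb (c2 e)) (by simp [profOfList, plist911]) hb
        · exact strong_no_block _ (Sym2.eq_swap ▸ hE03 e) (by simp [profOfList, plist911]) hb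
      · exact strong_no_block _ (hE12 e) (by simp [profOfList, plist911]) ha
      · simp only [profOfList, plist911, List.mem_toFinset] at hba
        simp at hba
        rcases hba with rfl | rfl
        · exact strong_no_block _ (Sym2.eq_swap ▸ hE03 e) (by simp [profOfList, plist911]) hb
        · exact strong_no_block _ (hE12 e) (by simp [profOfList, plist911]) hb
      · exact strong_no_block _ (Sym2.eq_swap ▸ hE03 e) (by simp [profOfList, plist911]) ha
end
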